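/- Let U be a unitary operator on ℂ^d and suppose there exists a unit vector ψ with ⟨ψ|U|ψ⟩ = 0. Then Θ(U) ≥ π, i.e., the eigenvalues of U are not all contained in an open arc of length less than π. -/

import Mathlib

open Complex Matrix

section Aux
open Polynomial
open scoped Matrix.Norms.L2Operator Pointwise


theorem eval_charpoly_of_mem_spectrum {d : ℕ} (U : Matrix (Fin d) (Fin d) ℂ) (z : ℂ)
    (hz : z ∈ spectrum ℂ U) : U.charpoly.eval z = 0 := by
  rw [spectrum.mem_iff] at hz
  have h1 : U.charpoly.eval z = ((charmatrix U).map (eval z)).det := by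
    rw [Matrix.charpoly]
    exact (RingHom.map_det (evalRingHom z) _)
  have h2 : (charmatrix U).map (eval z) = algebraMap ℂ _ z - U := by
    ext i j
    by_cases h : i = j <;>
      simp [h, charmatrix_apply, Matrix.algebraMap_matrix_apply, Matrix.sub_apply,
        Matrix.diagonal_apply, Matrix.map_apply]
  rw [h1, h2]
  by_contra hdet
  exact hz ((Matrix.isUnit_iff_isUnit_det _).mpr (isUnit_iff_ne_zero.mpr hdet))

/-- core lemma -/
theorem core {d : ℕ} (U : Matrix (Fin d) (Fin d) ℂ) (hU : U ∈ Matrix.unitaryGroup (Fin d) ℂ)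
    (ψ : Fin d → ℂ) (hψ : star ψ ⬝ᵥ ψ = 1)
    (hspec : ∀ z ∈ spectrum ℂ U, 0 < z.re) :
    star ψ ⬝ᵥ (U *ᵥ ψ) ≠ 0 := by
  intro horth
  -- d ≠ 0
  haveI : NeZero d := by
    rcases Nat.eq_zero_or_pos d with h | h
    · subst h; simpa [dotProduct] using hψ
    · exact ⟨h.ne'⟩
  have hU1 : U * star U = 1 := (Matrix.mem_unitaryGroup_iff).mp hU
  have hU1' : star U * U = 1 := (Matrix.mem_unitaryGroup_iff').mp hU
  have hUunit : IsUnit U := ⟨⟨U, star U, hU1, hU1'⟩, rfl⟩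
  -- constant coefficient of charpoly is nonzero
  set P := U.charpoly with hP
  set c₀ := P.coeff 0 with hc₀
  have hc₀ne : c₀ ≠ 0 := by
    have hdet : IsUnit U.det := (Matrix.isUnit_iff_isUnit_det U).mp hUunit
    have h := Matrix.det_eq_sign_charpoly_coeff U
    intro hc
    rw [show U.charpoly.coeff 0 = c₀ from rfl, hc, mul_zero] at h
    exact (isUnit_iff_ne_zero.mp hdet) h
  -- Cayley-Hamilton : U * (aeval U P.divX) = -(c₀ • 1)
  have hCH : U * (aeval U P.divX) + c₀ • 1 = 0 := by
    have h0 : aeval U P = 0 := Matrix.aeval_self_charpoly U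
    have h1 : (X : ℂ[X]) * P.divX + C c₀ = P := X_mul_divX_add P
    calc U * (aeval U P.divX) + c₀ • 1
        = aeval U (X * P.divX + C c₀) := by
          rw [map_add, _root_.map_mul, aeval_X, aeval_C, Algebra.algebraMap_eq_smul_one]
      _ = 0 := by rw [h1, h0]
  -- star U as polynomial in U
  have hstar : aeval U (C (-c₀⁻¹) * P.divX) = star U := by
    have h2 : U * (aeval U P.divX) = -(c₀ • 1) := eq_neg_of_add_eq_zero_left hCH
    have h3 : aeval U P.divX = -(c₀ • star U) := by
      calc aeval U P.divX = (star U * U) * aeval U P.divX := by rw [hU1', one_mul]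
        _ = star U * (U * aeval U P.divX) := by rw [mul_assoc]
        _ = star U * (-(c₀ • 1)) := by rw [h2]
        _ = -(c₀ • star U) := by
            rw [mul_neg, Matrix.mul_smul, mul_one]
    rw [_root_.map_mul, aeval_C, h3]
    rw [Algebra.algebraMap_eq_smul_one]
    rw [smul_mul_assoc, one_mul, smul_neg, smul_smul]
    rw [neg_mul, inv_mul_cancel₀ hc₀ne]
    simp
  -- the Hermitian matrix H = U + star U
  set f : ℂ[X] := X + C (-c₀⁻¹) * P.divX with hf
  have hH : aeval U f = U + star U := by
    rw [hf, map_add, aeval_X, hstar]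
  -- eigenvalue computation
  have heval : ∀ z ∈ spectrum ℂ U, f.eval z = 2 * z.re := by
    intro z hz
    have habs : ‖z‖ = 1 := by
      simpa using spectrum.subset_circle_of_unitary hU hz
    have hzne : z ≠ 0 := by
      intro h; rw [h] at habs; simp at habs
    have hPz : P.eval z = 0 := eval_charpoly_of_mem_spectrum U z hz
    have hdivX : z * (P.divX.eval z) + c₀ = 0 := by
      have := X_mul_divX_add P
      calc z * (P.divX.eval z) + c₀ = ((X : ℂ[X]) * P.divX + C c₀).eval z := by simp
        _ = P.eval z := by rw [this]
        _ = 0 := hPz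
    have hdivXz : P.divX.eval z = -c₀ / z := by
      field_simp
      linear_combination hdivX
    have hinv : z⁻¹ = (starRingEnd ℂ) z := by
      rw [Complex.inv_def]
      rw [Complex.normSq_eq_norm_sq, habs]
      simp
    have : f.eval z = z + z⁻¹ := by
      rw [hf]
      simp only [eval_add, eval_mul, eval_X, eval_C, hdivXz]
      field_simp
    rw [this, hinv, Complex.add_conj]
    push_cast
    ring
  -- spectrum of H
  have hspecH : spectrum ℂ (U + star U) = (fun z => eval z f) '' spectrum ℂ U := by
    rw [← hH]
    exact spectrum.map_polynomial_aeval_of_nonempty U f (spectrum.nonempty U)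
  have hHherm : (U + star U).IsHermitian := by
    unfold Matrix.IsHermitian
    rw [← Matrix.star_eq_conjTranspose, star_add, star_star, add_comm]
  -- eigenvalues of H are positive
  have heigpos : ∀ i, 0 < hHherm.eigenvalues i := by
    intro i
    have h1 : (hHherm.eigenvalues i : ℂ) ∈ spectrum ℂ (U + star U) := by
      have := hHherm.eigenvalues_mem_spectrum_real i
      exact spectrum.algebraMap_mem ℂ this
    rw [hspecH] at h1
    obtain ⟨z, hz, hzz⟩ := h1
    simp only at hzz
    rw [heval z hz] at hzz
    have h4 : (hHherm.eigenvalues i : ℝ) = 2 * z.re := by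
      exact_mod_cast hzz.symm
    rw [h4]
    linarith [hspec z hz]
  -- decompose ψ in the eigenbasis of H
  set V : Matrix (Fin d) (Fin d) ℂ := (hHherm.eigenvectorUnitary : Matrix (Fin d) (Fin d) ℂ)
    with hVdef
  have hV1 : V * star V = 1 := (Matrix.mem_unitaryGroup_iff).mp hHherm.eigenvectorUnitary.2
  set c : Fin d → ℂ := star V *ᵥ ψ with hcdef
  set μ : Fin d → ℝ := hHherm.eigenvalues with hμdef
  have hst : star c = star ψ ᵥ* V := by
    rw [hcdef, Matrix.star_mulVec, ← Matrix.star_eq_conjTranspose, star_star]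
  have hsum : ∑ i, Complex.normSq (c i) = 1 := by
    have h1 : star c ⬝ᵥ c = 1 := by
      rw [hst, Matrix.dotProduct_mulVec, Matrix.vecMul_vecMul, hV1, Matrix.vecMul_one, hψ]
    have h2 : star c ⬝ᵥ c = ((∑ i, Complex.normSq (c i) : ℝ) : ℂ) := by
      simp only [dotProduct, Pi.star_apply, RCLike.star_def]
      push_cast
      congr 1
      ext i
      rw [mul_comm, Complex.mul_conj]
    rw [h2] at h1
    exact_mod_cast h1
  -- the quadratic form vanishes
  have hq0 : star ψ ⬝ᵥ ((U + star U) *ᵥ ψ) = 0 := by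
    rw [Matrix.add_mulVec, dotProduct_add, horth, zero_add]
    have : star ψ ⬝ᵥ (star U *ᵥ ψ) = star (star ψ ⬝ᵥ (U *ᵥ ψ)) := by
      simp only [dotProduct, Matrix.mulVec, dotProduct, Finset.mul_sum, star_sum, star_mul',
        Pi.star_apply, Matrix.star_apply, star_star]
      rw [Finset.sum_comm]
      refine Finset.sum_congr rfl fun i _ => Finset.sum_congr rfl fun j _ => ?_
      ring
    rw [this, horth, star_zero]
  -- but it equals a positive sum
  have hdecomp : star ψ ⬝ᵥ ((U + star U) *ᵥ ψ)
      = ∑ i, ((μ i : ℂ) * (Complex.normSq (c i) : ℂ)) := by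
    have hVsp := hHherm.spectral_theorem
    calc star ψ ⬝ᵥ ((U + star U) *ᵥ ψ)
        = star ψ ⬝ᵥ ((V * (diagonal (RCLike.ofReal ∘ μ) * star V)) *ᵥ ψ) := by
          rw [← mul_assoc, hVsp, Unitary.conjStarAlgAut_apply]
      _ = star c ⬝ᵥ ((diagonal (RCLike.ofReal ∘ μ) * star V) *ᵥ ψ) := by
          rw [Matrix.dotProduct_mulVec, Matrix.dotProduct_mulVec, hst, Matrix.vecMul_vecMul]
      _ = star c ⬝ᵥ (diagonal (RCLike.ofReal ∘ μ) *ᵥ c) := by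
          rw [← Matrix.mulVec_mulVec, hcdef]
      _ = ∑ i, ((μ i : ℂ) * (Complex.normSq (c i) : ℂ)) := by
          simp only [dotProduct, Matrix.mulVec_diagonal, Pi.star_apply, RCLike.star_def,
            Function.comp_apply]
          refine Finset.sum_congr rfl fun i _ => ?_
          rw [← Complex.mul_conj (c i)]
          have h5 : (RCLike.ofReal (μ i) : ℂ) = (μ i : ℂ) := rfl
          rw [h5]
          ring
  rw [hq0] at hdecomp
  have hre : (0 : ℝ) = ∑ i, μ i * Complex.normSq (c i) := by
    have := congrArg Complex.re hdecomp
    simpa using this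
  have hpos : (0 : ℝ) < ∑ i, μ i * Complex.normSq (c i) := by
    obtain ⟨i, hi⟩ : ∃ i ∈ Finset.univ, Complex.normSq (c i) ≠ 0 := by
      have : (∑ i, Complex.normSq (c i)) ≠ 0 := by rw [hsum]; norm_num
      obtain ⟨i, hi⟩ := Finset.exists_ne_zero_of_sum_ne_zero this
      exact ⟨i, hi.1, hi.2⟩
    rcases hi with ⟨_, hi⟩
    refine Finset.sum_pos' (fun j _ => mul_nonneg (heigpos j).le (Complex.normSq_nonneg _)) ?_
    exact ⟨i, Finset.mem_univ i,
      mul_pos (heigpos i) (lt_of_le_of_ne (Complex.normSq_nonneg _) (Ne.symm hi))⟩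
  linarith

end Aux

/-- The length of the smallest closed arc of the unit circle containing the spectrum
of a matrix. -/
noncomputable def arcTheta {d : ℕ} (U : Matrix (Fin d) (Fin d) ℂ) : ℝ :=
  sInf {L : ℝ | 0 ≤ L ∧ ∃ a : ℝ, ∀ z ∈ spectrum ℂ U,
    ∃ t ∈ Set.Icc a (a + L), z = Complex.exp (Complex.I * t)}

section Aux2
open Polynomial
open scoped Matrix.Norms.L2Operator Pointwise

theorem pi_le_theta_of_orthogonal {d : ℕ}
    (U : Matrix (Fin d) (Fin d) ℂ) (hU : U ∈ Matrix.unitaryGroup (Fin d) ℂ)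
    (ψ : Fin d → ℂ) (hψ : star ψ ⬝ᵥ ψ = 1) (horth : star ψ ⬝ᵥ (U *ᵥ ψ) = 0) :
    Real.pi ≤ arcTheta U := by
  have hcirc : ∀ z ∈ spectrum ℂ U, ‖z‖ = 1 := fun z hz => by
    simpa using spectrum.subset_circle_of_unitary hU hz
  rw [arcTheta]
  have hne : {L : ℝ | 0 ≤ L ∧ ∃ a : ℝ, ∀ z ∈ spectrum ℂ U,
      ∃ t ∈ Set.Icc a (a + L), z = Complex.exp (Complex.I * t)}.Nonempty := by
    refine ⟨2 * Real.pi, by positivity, -Real.pi, fun z hz => ?_⟩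
    refine ⟨z.arg, ?_, ?_⟩
    · have h := Complex.arg_mem_Ioc z
      constructor
      · exact h.1.le
      · have := Real.pi_pos
        have := h.2
        linarith
    · have h := Complex.norm_mul_exp_arg_mul_I z
      rw [hcirc z hz] at h
      push_cast at h
      rw [one_mul] at h
      rw [mul_comm]
      exact h.symm
  refine le_csInf hne ?_
  rintro L ⟨hL0, a, ha⟩
  by_contra hLπ
  push_neg at hLπ
  set w : ℂ := Complex.exp (-(Complex.I * (a + L / 2))) with hwdef
  have hwne : w ≠ 0 := Complex.exp_ne_zero _
  have hwabs : ‖w‖ = 1 := by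
    rw [hwdef, Complex.norm_exp]
    have : (-(Complex.I * ((a : ℂ) + (L : ℝ) / 2))).re = 0 := by
      simp [Complex.mul_re]
    rw [this, Real.exp_zero]
  have hwmul : w * (starRingEnd ℂ) w = 1 := by
    rw [Complex.mul_conj, Complex.normSq_eq_norm_sq, hwabs]
    norm_num
  set U' : Matrix (Fin d) (Fin d) ℂ := w • U with hU'def
  have hU' : U' ∈ Matrix.unitaryGroup (Fin d) ℂ := by
    rw [Matrix.mem_unitaryGroup_iff]
    rw [hU'def, star_smul, smul_mul_assoc, Matrix.mul_smul, smul_smul]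
    rw [(Matrix.mem_unitaryGroup_iff).mp hU]
    rw [show star w = (starRingEnd ℂ) w from rfl, hwmul, one_smul]
  have horth' : star ψ ⬝ᵥ (U' *ᵥ ψ) = 0 := by
    rw [hU'def, Matrix.smul_mulVec, dotProduct_smul, horth, smul_zero]
  have hspec' : ∀ z' ∈ spectrum ℂ U', 0 < z'.re := by
    intro z' hz'
    have hsp : spectrum ℂ U' = (Units.mk0 w hwne) • spectrum ℂ U := by
      rw [hU'def, ← spectrum.unit_smul_eq_smul U (Units.mk0 w hwne)]
      rfl
    rw [hsp] at hz'
    obtain ⟨z, hz, rfl⟩ := hz'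
    obtain ⟨t, ht, rfl⟩ := ha z hz
    have hre : ((Units.mk0 w hwne) • Complex.exp (Complex.I * t)).re
        = Real.cos (t - (a + L / 2)) := by
      have h1 : (Units.mk0 w hwne) • Complex.exp (Complex.I * t)
          = Complex.exp (((t - (a + L / 2) : ℝ) : ℂ) * Complex.I) := by
        rw [Units.smul_def, Units.val_mk0, smul_eq_mul, hwdef, ← Complex.exp_add]
        congr 1
        push_cast
        ring
      rw [h1]
      exact Complex.exp_ofReal_mul_I_re _
    beta_reduce
    rw [Units.smul_def] at hre
    rw [hre]
    have hπ := Real.pi_pos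
    rcases ht with ⟨ht1, ht2⟩
    apply Real.cos_pos_of_mem_Ioo
    constructor
    · linarith
    · linarith
  exact core U' hU' ψ hψ hspec' horth'

end Aux2
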